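/- In the two-player interconnected contest with Tullock contest success function with parameter γ ∈ (0,1), in every Nash equilibrium both players exert positive effective effort at every battlefield (y_i^k > 0 for every i ∈ {1,2} and k ∈ B), and the equilibrium effective-effort vectors are unique: any two Nash equilibria induce the same pair (y_1, y_2) of effective-effort vectors. -/

import Mathlib

set_option linter.all false


open Finset Matrix

/-- Effective effort of a player with spillover matrix `ρ` and effort vector `e`
at battlefield `k`: `y^k = e^k + ∑_{l ≠ k} ρ^{l,k} e^l`. -/
noncomputable def effY {m : ℕ} (ρ : Matrix (Fin m) (Fin m) ℝ) (e : Fin m → ℝ)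
    (k : Fin m) : ℝ :=
  e k + ∑ l ∈ Finset.univ.erase k, ρ l k * e l

/-- Tullock contest success function with parameter `γ`.  When both effective
efforts are `0` this gives `0/0 = 0`, matching the convention. -/
noncomputable def tullock (γ y₁ y₂ : ℝ) : ℝ :=
  y₁ ^ γ / (y₁ ^ γ + y₂ ^ γ)

/-- Payoff of player `i` in the interconnected contest. -/
noncomputable def payoff {m : ℕ} (γ : ℝ) (v : Fin m → ℝ) (c : Fin 2 → ℝ)
    (ρ : Fin 2 → Matrix (Fin m) (Fin m) ℝ) (e : Fin 2 → Fin m → ℝ) (i : Fin 2) : ℝ :=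
  (∑ k, v k * tullock γ (effY (ρ i) (e i) k) (effY (ρ (1 - i)) (e (1 - i)) k))
    - c i * ∑ k, e i k

/-- Pure strategy Nash equilibrium of the interconnected contest:
nonnegative efforts, and no profitable deviation to any nonnegative effort vector. -/
def IsNashEq {m : ℕ} (γ : ℝ) (v : Fin m → ℝ) (c : Fin 2 → ℝ)
    (ρ : Fin 2 → Matrix (Fin m) (Fin m) ℝ) (e : Fin 2 → Fin m → ℝ) : Prop :=
  (∀ i k, 0 ≤ e i k) ∧
  ∀ (i : Fin 2) (e' : Fin m → ℝ), (∀ k, 0 ≤ e' k) →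
    payoff γ v c ρ (Function.update e i e') i ≤ payoff γ v c ρ e i

/-- Winning probability of player `i` at battlefield `k` under profile `e`. -/
noncomputable def eqProb {m : ℕ} (γ : ℝ) (ρ : Fin 2 → Matrix (Fin m) (Fin m) ℝ)
    (e : Fin 2 → Fin m → ℝ) (i : Fin 2) (k : Fin m) : ℝ :=
  tullock γ (effY (ρ i) (e i) k) (effY (ρ (1 - i)) (e (1 - i)) k)


section AuxLemmas

lemma effY_nonneg {m : ℕ} {ρ : Matrix (Fin m) (Fin m) ℝ} {e : Fin m → ℝ}
    (hρ : ∀ k l, 0 ≤ ρ k l) (he : ∀ k, 0 ≤ e k) (k : Fin m) :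
    0 ≤ effY ρ e k := by
  unfold effY
  have : 0 ≤ ∑ l ∈ Finset.univ.erase k, ρ l k * e l :=
    Finset.sum_nonneg fun l _ => mul_nonneg (hρ l k) (he l)
  linarith [he k]

lemma effY_lin {m : ℕ} (ρ : Matrix (Fin m) (Fin m) ℝ) (a b : Fin m → ℝ) (t : ℝ)
    (k : Fin m) :
    effY ρ (fun l => a l + t * b l) k = effY ρ a k + t * effY ρ b k := by
  unfold effY
  rw [Finset.sum_congr rfl (fun l _ => mul_add (ρ l k) (a l) (t * b l)),
    Finset.sum_add_distrib]
  have : ∑ l ∈ Finset.univ.erase k, ρ l k * (t * b l)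
      = t * ∑ l ∈ Finset.univ.erase k, ρ l k * b l := by
    rw [Finset.mul_sum]; exact Finset.sum_congr rfl fun l _ => by ring
  rw [this]; ring

lemma effY_single {m : ℕ} (ρ : Matrix (Fin m) (Fin m) ℝ) (hρ : ∀ k l, 0 ≤ ρ k l)
    (hρd : ∀ k, ρ k k = 0) (k0 k : Fin m) :
    effY ρ (fun l => if l = k0 then 1 else 0) k = if k = k0 then 1 else ρ k0 k := by
  unfold effY
  by_cases h : k = k0
  · subst h
    simp only [if_pos rfl]
    have : ∑ l ∈ Finset.univ.erase k, ρ l k * (if l = k then (1:ℝ) else 0) = 0 := by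
      apply Finset.sum_eq_zero
      intro l hl
      rw [if_neg (Finset.ne_of_mem_erase hl), mul_zero]
    simp [this]
  · rw [if_neg h]
    simp only [if_neg h, zero_add]
    rw [Finset.sum_eq_single k0]
    · simp
    · intro l hl hlk0; rw [if_neg hlk0, mul_zero]
    · intro hk0; exact absurd (Finset.mem_erase.2 ⟨fun hh => h hh.symm, Finset.mem_univ _⟩) hk0

lemma tullock_nonneg {γ a z : ℝ} (ha : 0 ≤ a) (hz : 0 ≤ z) : 0 ≤ tullock γ a z :=
  div_nonneg (Real.rpow_nonneg ha γ) (by positivity)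

lemma tullock_zero_left {γ z : ℝ} (hγ : 0 < γ) : tullock γ 0 z = 0 := by
  simp [tullock, Real.zero_rpow (ne_of_gt hγ)]

lemma tullock_mono_left {γ a b z : ℝ} (hγ : 0 < γ) (ha : 0 ≤ a) (hab : a ≤ b)
    (hz : 0 ≤ z) : tullock γ a z ≤ tullock γ b z := by
  unfold tullock
  rcases eq_or_lt_of_le hz with hz0 | hz0
  · subst hz0
    rw [Real.zero_rpow (ne_of_gt hγ), add_zero, add_zero]
    rcases eq_or_lt_of_le ha with ha0 | ha0
    · subst ha0
      rw [Real.zero_rpow (ne_of_gt hγ), zero_div]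
      rcases eq_or_lt_of_le (le_trans ha hab) with hb0 | hb0
      · rw [← hb0, Real.zero_rpow (ne_of_gt hγ), zero_div]
      · rw [div_self (ne_of_gt (Real.rpow_pos_of_pos hb0 γ))]
        exact zero_le_one
    · rw [div_self (ne_of_gt (Real.rpow_pos_of_pos ha0 γ)),
        div_self (ne_of_gt (Real.rpow_pos_of_pos (lt_of_lt_of_le ha0 hab) γ))]
  · have hzγ : 0 < z ^ γ := Real.rpow_pos_of_pos hz0 γ
    have habγ : a ^ γ ≤ b ^ γ := Real.rpow_le_rpow ha hab (le_of_lt hγ)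
    have hbne : 0 < b ^ γ + z ^ γ := add_pos_of_nonneg_of_pos (Real.rpow_nonneg (le_trans ha hab) γ) hzγ
    have hane : 0 < a ^ γ + z ^ γ := add_pos_of_nonneg_of_pos (Real.rpow_nonneg ha γ) hzγ
    rw [div_le_div_iff₀ hane hbne]
    nlinarith

noncomputable def lam (γ v x y : ℝ) : ℝ :=
  γ * v * x ^ (γ - 1) * y ^ γ / ((x ^ γ + y ^ γ) ^ 2)

lemma lam_eq {γ v x y : ℝ} (hx : 0 < x) :
    lam γ v x y = γ * v * (x ^ γ / x) * y ^ γ / ((x ^ γ + y ^ γ) ^ 2) := by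
  rw [lam, Real.rpow_sub_one hx.ne']

lemma line_hasDerivAt (x dx t0 : ℝ) : HasDerivAt (fun t : ℝ => x + t * dx) dx t0 := by
  simpa using ((hasDerivAt_id t0).mul_const dx).const_add x

lemma psi_hasDerivAt (γ v x y dx dy t0 : ℝ)
    (hX : 0 < x + t0 * dx) (hY : 0 < y + t0 * dy) :
    HasDerivAt
      (fun t => lam γ v (x + t * dx) (y + t * dy) * dx
        + lam γ v (y + t * dy) (x + t * dx) * dy)
      (γ * v * ( ((y + t0*dy) ^ γ) * ((x + t0*dx) ^ γ) / (x + t0*dx) ^ 2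
            * ((γ - 1) * ((x + t0*dx) ^ γ + (y + t0*dy) ^ γ) - 2 * γ * (x + t0*dx) ^ γ) * dx ^ 2
          + ((x + t0*dx) ^ γ) * ((y + t0*dy) ^ γ) / (y + t0*dy) ^ 2
            * ((γ - 1) * ((x + t0*dx) ^ γ + (y + t0*dy) ^ γ) - 2 * γ * (y + t0*dy) ^ γ) * dy ^ 2)
        / ((x + t0*dx) ^ γ + (y + t0*dy) ^ γ) ^ 3) t0 := by
  set X0 : ℝ := x + t0 * dx with hX0
  set Y0 : ℝ := y + t0 * dy with hY0
  have hA0 : (0:ℝ) < X0 ^ γ := Real.rpow_pos_of_pos hX γ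
  have hP0 : (0:ℝ) < Y0 ^ γ := Real.rpow_pos_of_pos hY γ
  have hS0 : (0:ℝ) < X0 ^ γ + Y0 ^ γ := by linarith
  -- derivative of the rational reformulation g
  have hXd : HasDerivAt (fun t : ℝ => x + t * dx) dx t0 := line_hasDerivAt x dx t0
  have hYd : HasDerivAt (fun t : ℝ => y + t * dy) dy t0 := line_hasDerivAt y dy t0
  have hA : HasDerivAt (fun t : ℝ => (x + t * dx) ^ γ) (dx * γ * (X0 ^ γ / X0)) t0 := by
    have := hXd.rpow_const (p := γ) (Or.inl hX.ne')
    rwa [Real.rpow_sub_one hX.ne'] at this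
  have hP : HasDerivAt (fun t : ℝ => (y + t * dy) ^ γ) (dy * γ * (Y0 ^ γ / Y0)) t0 := by
    have := hYd.rpow_const (p := γ) (Or.inl hY.ne')
    rwa [Real.rpow_sub_one hY.ne'] at this
  have hAX : HasDerivAt (fun t : ℝ => (x + t * dx) ^ γ / (x + t * dx))
      ((dx * γ * (X0 ^ γ / X0) * X0 - X0 ^ γ * dx) / X0 ^ 2) t0 := hA.div hXd hX.ne'
  have hPY : HasDerivAt (fun t : ℝ => (y + t * dy) ^ γ / (y + t * dy))
      ((dy * γ * (Y0 ^ γ / Y0) * Y0 - Y0 ^ γ * dy) / Y0 ^ 2) t0 := hP.div hYd hY.ne'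
  have hB : HasDerivAt (fun t : ℝ =>
      ((x + t * dx) ^ γ / (x + t * dx)) * (y + t * dy) ^ γ * dx
      + ((y + t * dy) ^ γ / (y + t * dy)) * (x + t * dx) ^ γ * dy)
      ((((dx * γ * (X0 ^ γ / X0) * X0 - X0 ^ γ * dx) / X0 ^ 2) * Y0 ^ γ
          + (X0 ^ γ / X0) * (dy * γ * (Y0 ^ γ / Y0))) * dx
        + ((((dy * γ * (Y0 ^ γ / Y0) * Y0 - Y0 ^ γ * dy) / Y0 ^ 2) * X0 ^ γ
          + (Y0 ^ γ / Y0) * (dx * γ * (X0 ^ γ / X0))) * dy)) t0 :=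
    ((hAX.mul hP).mul_const dx).add ((hPY.mul hA).mul_const dy)
  have hS : HasDerivAt (fun t : ℝ => ((x + t * dx) ^ γ + (y + t * dy) ^ γ) ^ 2)
      (2 * (X0 ^ γ + Y0 ^ γ) ^ 1 * (dx * γ * (X0 ^ γ / X0) + dy * γ * (Y0 ^ γ / Y0))) t0 := by
    simpa using (hA.fun_add hP).fun_pow 2
  have hg := ((hB.div hS (by positivity)).const_mul (γ * v))
  have heq : (fun t => lam γ v (x + t * dx) (y + t * dy) * dx
        + lam γ v (y + t * dy) (x + t * dx) * dy)
      =ᶠ[nhds t0] (fun t => γ * v *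
        ((((x + t * dx) ^ γ / (x + t * dx)) * (y + t * dy) ^ γ * dx
          + ((y + t * dy) ^ γ / (y + t * dy)) * (x + t * dx) ^ γ * dy)
          / (((x + t * dx) ^ γ + (y + t * dy) ^ γ) ^ 2))) := by
    have h1 : ∀ᶠ t in nhds t0, 0 < x + t * dx :=
      (line_hasDerivAt x dx t0).continuousAt.eventually (eventually_gt_nhds hX)
    have h2 : ∀ᶠ t in nhds t0, 0 < y + t * dy :=
      (line_hasDerivAt y dy t0).continuousAt.eventually (eventually_gt_nhds hY)
    filter_upwards [h1, h2] with t ht1 ht2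
    rw [lam_eq ht1, lam_eq ht2]
    ring
  refine (HasDerivAt.congr_of_eventuallyEq ?_ heq)
  convert hg using 1
  have hXne := hX.ne'
  have hYne := hY.ne'
  have hS0ne := hS0.ne'
  · rfl
  · rfl
  simp only [← hX0, ← hY0]
  field_simp
  ring

lemma deriv_neg_aux {γ v X0 Y0 dx dy : ℝ} (hγ0 : 0 < γ) (hγ1 : γ < 1) (hv : 0 < v)
    (hX : 0 < X0) (hY : 0 < Y0) (hne : dx ≠ 0 ∨ dy ≠ 0) :
    γ * v * ( (Y0 ^ γ) * (X0 ^ γ) / X0 ^ 2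
          * ((γ - 1) * (X0 ^ γ + Y0 ^ γ) - 2 * γ * X0 ^ γ) * dx ^ 2
        + (X0 ^ γ) * (Y0 ^ γ) / Y0 ^ 2
          * ((γ - 1) * (X0 ^ γ + Y0 ^ γ) - 2 * γ * Y0 ^ γ) * dy ^ 2)
      / (X0 ^ γ + Y0 ^ γ) ^ 3 < 0 := by
  have hA0 : (0:ℝ) < X0 ^ γ := Real.rpow_pos_of_pos hX γ
  have hP0 : (0:ℝ) < Y0 ^ γ := Real.rpow_pos_of_pos hY γ
  have hS0 : (0:ℝ) < X0 ^ γ + Y0 ^ γ := by linarith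
  have hb1 : (γ - 1) * (X0 ^ γ + Y0 ^ γ) - 2 * γ * X0 ^ γ < 0 := by nlinarith
  have hb2 : (γ - 1) * (X0 ^ γ + Y0 ^ γ) - 2 * γ * Y0 ^ γ < 0 := by nlinarith
  have hq1 : (0:ℝ) < (Y0 ^ γ) * (X0 ^ γ) / X0 ^ 2 := by positivity
  have hq2 : (0:ℝ) < (X0 ^ γ) * (Y0 ^ γ) / Y0 ^ 2 := by positivity
  have hsum : (Y0 ^ γ) * (X0 ^ γ) / X0 ^ 2
          * ((γ - 1) * (X0 ^ γ + Y0 ^ γ) - 2 * γ * X0 ^ γ) * dx ^ 2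
        + (X0 ^ γ) * (Y0 ^ γ) / Y0 ^ 2
          * ((γ - 1) * (X0 ^ γ + Y0 ^ γ) - 2 * γ * Y0 ^ γ) * dy ^ 2 < 0 := by
    rcases hne with h | h
    · have hdx : 0 < dx ^ 2 := by positivity
      have hdy : 0 ≤ dy ^ 2 := sq_nonneg dy
      have t1 := mul_neg_of_neg_of_pos (mul_neg_of_pos_of_neg hq1 hb1) hdx
      have t2 := mul_nonpos_of_nonpos_of_nonneg
        (le_of_lt (mul_neg_of_pos_of_neg hq2 hb2)) hdy
      linarith
    · have hdy : 0 < dy ^ 2 := by positivity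
      have hdx : 0 ≤ dx ^ 2 := sq_nonneg dx
      have t1 := mul_nonpos_of_nonpos_of_nonneg
        (le_of_lt (mul_neg_of_pos_of_neg hq1 hb1)) hdx
      have t2 := mul_neg_of_neg_of_pos (mul_neg_of_pos_of_neg hq2 hb2) hdy
      linarith
  have hS3 : (0:ℝ) < (X0 ^ γ + Y0 ^ γ) ^ 3 := by positivity
  have : γ * v * ((Y0 ^ γ) * (X0 ^ γ) / X0 ^ 2
          * ((γ - 1) * (X0 ^ γ + Y0 ^ γ) - 2 * γ * X0 ^ γ) * dx ^ 2
        + (X0 ^ γ) * (Y0 ^ γ) / Y0 ^ 2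
          * ((γ - 1) * (X0 ^ γ + Y0 ^ γ) - 2 * γ * Y0 ^ γ) * dy ^ 2) < 0 :=
    mul_neg_of_pos_of_neg (by positivity) hsum
  exact div_neg_of_neg_of_pos this hS3

lemma lam_pair_strict {γ v x y x' y' : ℝ} (hγ0 : 0 < γ) (hγ1 : γ < 1) (hv : 0 < v)
    (hx : 0 < x) (hy : 0 < y) (hx' : 0 < x') (hy' : 0 < y')
    (hne : x ≠ x' ∨ y ≠ y') :
    (lam γ v x y - lam γ v x' y') * (x - x')
      + (lam γ v y x - lam γ v y' x') * (y - y') < 0 := by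
  set dx : ℝ := x - x' with hdx
  set dy : ℝ := y - y' with hdy
  set ψ : ℝ → ℝ := fun t => lam γ v (x' + t * dx) (y' + t * dy) * dx
      + lam γ v (y' + t * dy) (x' + t * dx) * dy with hψ
  have hposX : ∀ t ∈ Set.Icc (0:ℝ) 1, 0 < x' + t * dx := by
    intro t ht
    rcases ht with ⟨h0, h1⟩
    have : x' + t * dx = (1 - t) * x' + t * x := by rw [hdx]; ring
    rw [this]
    rcases eq_or_lt_of_le h0 with h | h
    · subst h; simpa using hx'
    · have : 0 < t * x := mul_pos h hx
      nlinarith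
  have hposY : ∀ t ∈ Set.Icc (0:ℝ) 1, 0 < y' + t * dy := by
    intro t ht
    rcases ht with ⟨h0, h1⟩
    have : y' + t * dy = (1 - t) * y' + t * y := by rw [hdy]; ring
    rw [this]
    rcases eq_or_lt_of_le h0 with h | h
    · subst h; simpa using hy'
    · have : 0 < t * y := mul_pos h hy
      nlinarith
  have hD : ∀ t ∈ Set.Icc (0:ℝ) 1, HasDerivAt ψ
      (γ * v * ( ((y' + t*dy) ^ γ) * ((x' + t*dx) ^ γ) / (x' + t*dx) ^ 2
            * ((γ - 1) * ((x' + t*dx) ^ γ + (y' + t*dy) ^ γ) - 2 * γ * (x' + t*dx) ^ γ) * dx ^ 2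
          + ((x' + t*dx) ^ γ) * ((y' + t*dy) ^ γ) / (y' + t*dy) ^ 2
            * ((γ - 1) * ((x' + t*dx) ^ γ + (y' + t*dy) ^ γ) - 2 * γ * (y' + t*dy) ^ γ) * dy ^ 2)
        / ((x' + t*dx) ^ γ + (y' + t*dy) ^ γ) ^ 3) t := fun t ht =>
    psi_hasDerivAt γ v x' y' dx dy t (hposX t ht) (hposY t ht)
  have hcont : ContinuousOn ψ (Set.Icc (0:ℝ) 1) := fun t ht =>
    (hD t ht).continuousAt.continuousWithinAt
  have hne' : dx ≠ 0 ∨ dy ≠ 0 := by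
    rcases hne with h | h
    · exact Or.inl (sub_ne_zero.2 h)
    · exact Or.inr (sub_ne_zero.2 h)
  have hanti : StrictAntiOn ψ (Set.Icc (0:ℝ) 1) := by
    apply strictAntiOn_of_deriv_neg (convex_Icc 0 1) hcont
    intro t ht
    rw [interior_Icc] at ht
    have ht' : t ∈ Set.Icc (0:ℝ) 1 := Set.mem_Icc.2 ⟨le_of_lt ht.1, le_of_lt ht.2⟩
    rw [(hD t ht').deriv]
    exact deriv_neg_aux hγ0 hγ1 hv (hposX t ht') (hposY t ht') hne'
  have h01 : ψ 1 < ψ 0 :=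
    hanti (Set.mem_Icc.2 ⟨le_refl 0, zero_le_one⟩)
      (Set.mem_Icc.2 ⟨zero_le_one, le_refl 1⟩) zero_lt_one
  have h0 : ψ 0 = lam γ v x' y' * dx + lam γ v y' x' * dy := by simp [hψ]
  have h1 : ψ 1 = lam γ v x y * dx + lam γ v y x * dy := by
    have hx1 : x' + 1 * dx = x := by rw [hdx]; ring
    have hy1 : y' + 1 * dy = y := by rw [hdy]; ring
    simp only [hψ, hx1, hy1]
  rw [h0, h1] at h01
  nlinarith [h01]

lemma fin2_sub_ne (i : Fin 2) : 1 - i ≠ i := by fin_cases i <;> decide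

lemma eq_pos {m : ℕ} {γ : ℝ} (hγ0 : 0 < γ) (hγ1 : γ < 1)
    {v : Fin m → ℝ} (hv : ∀ k, 0 < v k)
    {c : Fin 2 → ℝ} (hc : ∀ i, 0 < c i)
    {ρ : Fin 2 → Matrix (Fin m) (Fin m) ℝ}
    (hρ : ∀ i k l, 0 ≤ ρ i k l) (hρd : ∀ i k, ρ i k k = 0)
    {e : Fin 2 → Fin m → ℝ} (he : IsNashEq γ v c ρ e) :
    ∀ i k, 0 < effY (ρ i) (e i) k := by
  intro i k0
  have hY0 : ∀ (j : Fin 2) k, 0 ≤ effY (ρ j) (e j) k :=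
    fun j k => effY_nonneg (hρ j) (he.1 j) k
  by_contra hcon
  have hzero : effY (ρ i) (e i) k0 = 0 := le_antisymm (not_lt.1 hcon) (hY0 i k0)
  set z : ℝ := effY (ρ (1 - i)) (e (1 - i)) k0 with hzdef
  have hz : 0 ≤ z := hY0 (1 - i) k0
  have hzγ : 0 ≤ z ^ γ := Real.rpow_nonneg hz γ
  set K : ℝ := v k0 / (c i * (1 + z ^ γ)) with hKdef
  have hK : 0 < K := div_pos (hv k0) (mul_pos (hc i) (by linarith))
  set M : ℝ := min K 1 with hMdef
  have hM : 0 < M := lt_min hK one_pos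
  have hM1 : M ≤ 1 := min_le_right _ _
  have h1γ : (0:ℝ) < 1 - γ := by linarith
  set ε : ℝ := M ^ ((1:ℝ)/(1-γ)) / 2 with hεdef
  have hMr : 0 < M ^ ((1:ℝ)/(1-γ)) := Real.rpow_pos_of_pos hM _
  have hε0 : 0 < ε := by positivity
  have hε1 : ε ≤ 1 := by
    have : M ^ ((1:ℝ)/(1-γ)) ≤ 1 :=
      Real.rpow_le_one hM.le hM1 (by positivity)
    rw [hεdef]; linarith
  -- key inequality : ε ^ (1 - γ) < K
  have hkey : ε ^ (1 - γ) < K := by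
    have hsplit : ε ^ (1-γ) = (M ^ ((1:ℝ)/(1-γ))) ^ (1-γ) / (2:ℝ) ^ (1-γ) := by
      rw [hεdef, Real.div_rpow hMr.le (by norm_num)]
    have hMM : (M ^ ((1:ℝ)/(1-γ))) ^ (1-γ) = M := by
      rw [← Real.rpow_mul hM.le]
      rw [one_div, inv_mul_cancel₀ h1γ.ne', Real.rpow_one]
    have h2 : (1:ℝ) < (2:ℝ) ^ (1-γ) := by
      have := Real.rpow_lt_rpow_left_iff (x := (2:ℝ)) (by norm_num) (y := 0) (z := 1-γ)
      have h0 : (2:ℝ) ^ (0:ℝ) = 1 := Real.rpow_zero 2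
      nth_rewrite 1 [← h0]
      exact this.2 h1γ
    rw [hsplit, hMM]
    exact lt_of_lt_of_le (div_lt_self hM h2) (min_le_left _ _)
  -- the deviation
  set δ : Fin m → ℝ := fun l => if l = k0 then 1 else 0 with hδdef
  set e'' : Fin m → ℝ := fun l => e i l + ε * δ l with he''def
  have he''nonneg : ∀ l, 0 ≤ e'' l := by
    intro l
    have : 0 ≤ δ l := by rw [hδdef]; dsimp only; split <;> norm_num
    have := mul_nonneg hε0.le this
    exact add_nonneg (he.1 i l) this
  have hle := he.2 i e'' he''nonneg
  have hupd1 : Function.update e i e'' i = e'' := Function.update_self i e'' e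
  have hupd2 : Function.update e i e'' (1 - i) = e (1 - i) :=
    Function.update_of_ne (fin2_sub_ne i) e'' e
  have hupd : payoff γ v c ρ (Function.update e i e'') i
      = (∑ k, v k * tullock γ (effY (ρ i) e'' k) (effY (ρ (1 - i)) (e (1 - i)) k))
        - c i * ∑ k, e'' k := by
    unfold payoff
    rw [hupd1, hupd2]
  have heff : ∀ k, effY (ρ i) e'' k
      = effY (ρ i) (e i) k + ε * (if k = k0 then 1 else ρ i k0 k) := by
    intro k
    rw [he''def]
    rw [effY_lin (ρ i) (e i) δ ε k, hδdef, effY_single (ρ i) (hρ i) (hρd i) k0 k]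
  have hsum'' : ∑ k, e'' k = (∑ k, e i k) + ε := by
    rw [he''def]
    rw [Finset.sum_add_distrib]
    congr 1
    rw [hδdef]
    simp [mul_ite, Finset.sum_ite_eq']
  have hnew0 : effY (ρ i) e'' k0 = ε := by
    rw [heff k0, hzero, if_pos rfl]; ring
  have hεγ : 0 < ε ^ γ := Real.rpow_pos_of_pos hε0 γ
  have h1z : (0:ℝ) < 1 + z ^ γ := by linarith
  have hεsplit : ε ^ (1 - γ) * ε ^ γ = ε := by
    rw [← Real.rpow_add hε0]
    norm_num
  have hmain : c i * ε * (1 + z ^ γ) < v k0 * ε ^ γ := by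
    have hcp : 0 < c i * (1 + z ^ γ) := mul_pos (hc i) h1z
    have h3 : ε ^ (1 - γ) * (c i * (1 + z ^ γ)) < v k0 := by
      rw [← lt_div_iff₀ hcp] at *
      exact hkey
    have h4 := mul_lt_mul_of_pos_right h3 hεγ
    calc c i * ε * (1 + z ^ γ) = ε ^ (1 - γ) * (c i * (1 + z ^ γ)) * ε ^ γ := by
          linear_combination (c i * (1 + z ^ γ)) * hεsplit.symm
      _ < v k0 * ε ^ γ := h4
  have htul : ε ^ γ / (1 + z ^ γ) ≤ tullock γ ε z := by
    unfold tullock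
    apply div_le_div_of_nonneg_left hεγ.le ?_ ?_
    · positivity
    · have : ε ^ γ ≤ 1 := Real.rpow_le_one hε0.le hε1 hγ0.le
      linarith
  have hq : c i * ε < v k0 * tullock γ ε z := by
    have h5 : c i * ε < v k0 * (ε ^ γ / (1 + z ^ γ)) := by
      have h5' := (lt_div_iff₀ h1z).2 hmain
      rwa [mul_div_assoc] at h5'
    calc c i * ε < v k0 * (ε ^ γ / (1 + z ^ γ)) := h5
      _ ≤ v k0 * tullock γ ε z := mul_le_mul_of_nonneg_left htul (hv k0).le
  -- sum comparison
  set Z : Fin m → ℝ := fun k => effY (ρ (1 - i)) (e (1 - i)) k with hZdef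
  have hge : v k0 * tullock γ ε z
      ≤ ∑ k, (v k * tullock γ (effY (ρ i) e'' k) (Z k)
              - v k * tullock γ (effY (ρ i) (e i) k) (Z k)) := by
    have hk0term : v k0 * tullock γ ε z
        = v k0 * tullock γ (effY (ρ i) e'' k0) (Z k0)
          - v k0 * tullock γ (effY (ρ i) (e i) k0) (Z k0) := by
      rw [hnew0, hzero, tullock_zero_left hγ0]
      rw [hZdef]
      simp [hzdef]
    rw [hk0term]
    apply Finset.single_le_sum (f := fun k => v k * tullock γ (effY (ρ i) e'' k) (Z k)
              - v k * tullock γ (effY (ρ i) (e i) k) (Z k)) ?_ (Finset.mem_univ k0)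
    intro k _
    show 0 ≤ v k * tullock γ (effY (ρ i) e'' k) (Z k)
      - v k * tullock γ (effY (ρ i) (e i) k) (Z k)
    have hmono : tullock γ (effY (ρ i) (e i) k) (Z k)
        ≤ tullock γ (effY (ρ i) e'' k) (Z k) := by
      apply tullock_mono_left hγ0 (hY0 i k) ?_ (hY0 (1 - i) k)
      rw [heff k]
      have : 0 ≤ (if k = k0 then (1:ℝ) else ρ i k0 k) := by
        split
        · norm_num
        · exact hρ i k0 k
      nlinarith
    have := mul_le_mul_of_nonneg_left hmono (hv k).le
    linarith
  rw [Finset.sum_sub_distrib] at hge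
  have hP : payoff γ v c ρ e i
      = (∑ k, v k * tullock γ (effY (ρ i) (e i) k) (Z k)) - c i * ∑ k, e i k := rfl
  rw [hupd, hP, hsum''] at hle
  have : (∑ k, v k * tullock γ (effY (ρ i) e'' k) (Z k))
      - (∑ k, v k * tullock γ (effY (ρ i) (e i) k) (Z k)) ≤ c i * ε := by nlinarith
  linarith

lemma tullock_line_hasDerivAt {γ : ℝ} (hγ0 : 0 < γ) {x w z : ℝ} (hx : 0 < x)
    (hz : 0 ≤ z) :
    HasDerivAt (fun t : ℝ => tullock γ (x + t * w) z)
      (γ * x ^ (γ - 1) * z ^ γ / ((x ^ γ + z ^ γ) ^ 2) * w) 0 := by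
  have h0 : x + (0:ℝ) * w = x := by ring
  have hX : HasDerivAt (fun t : ℝ => x + t * w) w 0 := line_hasDerivAt x w 0
  have hN : HasDerivAt (fun t : ℝ => (x + t * w) ^ γ)
      (w * γ * (x + 0 * w) ^ (γ - 1)) 0 :=
    hX.rpow_const (Or.inl (by rw [h0]; exact hx.ne'))
  have hD : HasDerivAt (fun t : ℝ => (x + t * w) ^ γ + z ^ γ)
      (w * γ * (x + 0 * w) ^ (γ - 1)) 0 := hN.add_const _
  have hden : (x + 0 * w) ^ γ + z ^ γ ≠ 0 := by
    rw [h0]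
    have h1 : 0 < x ^ γ := Real.rpow_pos_of_pos hx γ
    have h2 : 0 ≤ z ^ γ := Real.rpow_nonneg hz γ
    positivity
  have hQ := hN.div hD hden
  have : HasDerivAt (fun t : ℝ => tullock γ (x + t * w) z)
      ((w * γ * (x + 0 * w) ^ (γ - 1) * ((x + 0 * w) ^ γ + z ^ γ)
        - (x + 0 * w) ^ γ * (w * γ * (x + 0 * w) ^ (γ - 1)))
        / ((x + 0 * w) ^ γ + z ^ γ) ^ 2) 0 := hQ
  rw [h0] at this
  convert this using 1
  have h1 : 0 < x ^ γ := Real.rpow_pos_of_pos hx γ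
  have h2 : 0 ≤ z ^ γ := Real.rpow_nonneg hz γ
  have hS : x ^ γ + z ^ γ ≠ 0 := by positivity
  field_simp
  ring

lemma vi_lemma {m : ℕ} {γ : ℝ} (hγ0 : 0 < γ)
    {v : Fin m → ℝ} {c : Fin 2 → ℝ}
    {ρ : Fin 2 → Matrix (Fin m) (Fin m) ℝ} {e : Fin 2 → Fin m → ℝ}
    (he : IsNashEq γ v c ρ e)
    (hpos : ∀ j k, 0 < effY (ρ j) (e j) k)
    (i : Fin 2) (g : Fin m → ℝ) (hg : ∀ k, 0 ≤ g k) :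
    ∑ k, lam γ (v k) (effY (ρ i) (e i) k) (effY (ρ (1 - i)) (e (1 - i)) k)
        * (effY (ρ i) g k - effY (ρ i) (e i) k)
      ≤ c i * ((∑ k, g k) - ∑ k, e i k) := by
  set Y : Fin m → ℝ := fun k => effY (ρ i) (e i) k with hYdef
  set Z : Fin m → ℝ := fun k => effY (ρ (1 - i)) (e (1 - i)) k with hZdef
  set d : Fin m → ℝ := fun l => g l - e i l with hddef
  set w : Fin m → ℝ := fun k => effY (ρ i) d k with hwdef
  have hYpos : ∀ k, 0 < Y k := fun k => hpos i k
  have hZ0 : ∀ k, 0 ≤ Z k := fun k => (hpos (1 - i) k).le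
  -- the one-dimensional payoff along the line
  set f : ℝ → ℝ := fun t => (∑ k, v k * tullock γ (Y k + t * w k) (Z k))
      - c i * (∑ l, (e i l + t * d l)) with hfdef
  have hfeq : ∀ t : ℝ, f t
      = payoff γ v c ρ (Function.update e i (fun l => e i l + t * d l)) i := by
    intro t
    unfold payoff
    rw [Function.update_self, Function.update_of_ne (fin2_sub_ne i)]
    rw [hfdef]
    dsimp only
    congr 1
    apply Finset.sum_congr rfl
    intro k _
    rw [effY_lin (ρ i) (e i) d t k]
  have hf0 : f 0 = payoff γ v c ρ e i := by
    rw [hfeq 0]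
    congr 1
    have : (fun l => e i l + (0:ℝ) * d l) = e i := by funext l; ring
    rw [this, Function.update_eq_self]
  have hle : ∀ t ∈ Set.Ioc (0:ℝ) 1, f t ≤ f 0 := by
    intro t ht
    rw [hf0, hfeq t]
    apply he.2 i
    intro l
    have h1 : e i l + t * d l = (1 - t) * e i l + t * g l := by rw [hddef]; ring
    rw [h1]
    have := he.1 i l
    have := hg l
    nlinarith [ht.1.le, ht.2]
  -- derivative of f at 0
  set D : ℝ := (∑ k, v k * (γ * (Y k) ^ (γ-1) * (Z k) ^ γ
      / (((Y k) ^ γ + (Z k) ^ γ) ^ 2) * w k)) - c i * (∑ l, d l) with hDdef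
  have hderiv : HasDerivAt f D 0 := by
    rw [hfdef, hDdef]
    apply HasDerivAt.sub
    · apply HasDerivAt.fun_sum
      intro k _
      exact (tullock_line_hasDerivAt hγ0 (hYpos k) (hZ0 k)).const_mul (v k)
    · have : HasDerivAt (fun t : ℝ => ∑ l, (e i l + t * d l)) (∑ l, d l) 0 := by
        apply HasDerivAt.fun_sum
        intro l _
        exact line_hasDerivAt (e i l) (d l) 0
      exact this.const_mul (c i)
  -- the derivative is ≤ 0
  have hD0 : D ≤ 0 := by
    have hslope : Filter.Tendsto (slope f 0) (nhdsWithin 0 (Set.Ioi 0)) (nhds D) :=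
      (hasDerivAt_iff_tendsto_slope.1 hderiv).mono_left
        (nhdsWithin_mono 0 (fun t ht => ne_of_gt ht))
    apply le_of_tendsto hslope
    filter_upwards [Ioc_mem_nhdsGT_of_mem (Set.mem_Ico.2 ⟨le_refl 0, zero_lt_one⟩)]
      with t ht
    rw [slope_def_field]
    have h1 := hle t ht
    have h2 : 0 < t - 0 := by simpa using ht.1
    exact div_nonpos_of_nonpos_of_nonneg (by linarith) (by linarith)
  -- rewrite
  have hw : ∀ k, effY (ρ i) g k = Y k + w k := by
    intro k
    have h1 : (fun l => e i l + 1 * d l) = g := by funext l; rw [hddef]; ring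
    have := effY_lin (ρ i) (e i) d 1 k
    rw [h1] at this
    rw [this, hYdef, hwdef]
    ring
  have hsd : (∑ l, d l) = (∑ k, g k) - ∑ k, e i k := by
    rw [hddef, ← Finset.sum_sub_distrib]
  have hlam : ∀ k, v k * (γ * (Y k) ^ (γ-1) * (Z k) ^ γ
      / (((Y k) ^ γ + (Z k) ^ γ) ^ 2) * w k)
      = lam γ (v k) (Y k) (Z k) * w k := by
    intro k
    rw [lam]
    ring
  calc ∑ k, lam γ (v k) (Y k) (Z k) * (effY (ρ i) g k - Y k)
      = ∑ k, v k * (γ * (Y k) ^ (γ-1) * (Z k) ^ γ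
          / (((Y k) ^ γ + (Z k) ^ γ) ^ 2) * w k) := by
        apply Finset.sum_congr rfl
        intro k _
        rw [hlam k, hw k]
        ring
    _ ≤ c i * ((∑ k, g k) - ∑ k, e i k) := by
        rw [← hsd]
        have := hD0
        rw [hDdef] at this
        linarith


end AuxLemmas

/-- for γ ∈ (0,1), in every equilibrium both players exert
positive effective effort everywhere, and equilibrium effective efforts are
unique across equilibria. -/
theorem effective_efforts_positive_and_unique
    (m : ℕ) (γ : ℝ) (hγ0 : 0 < γ) (hγ1 : γ < 1)
    (v : Fin m → ℝ) (hv : ∀ k, 0 < v k)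
    (c : Fin 2 → ℝ) (hc : ∀ i, 0 < c i)
    (ρ : Fin 2 → Matrix (Fin m) (Fin m) ℝ)
    (hρ : ∀ i k l, 0 ≤ ρ i k l) (hρd : ∀ i k, ρ i k k = 0)
    (e e' : Fin 2 → Fin m → ℝ)
    (he : IsNashEq γ v c ρ e) (he' : IsNashEq γ v c ρ e') :
    (∀ i k, 0 < effY (ρ i) (e i) k) ∧
    (∀ i k, effY (ρ i) (e i) k = effY (ρ i) (e' i) k) := by
  have hpos : ∀ i k, 0 < effY (ρ i) (e i) k := eq_pos hγ0 hγ1 hv hc hρ hρd he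
  have hpos' : ∀ i k, 0 < effY (ρ i) (e' i) k := eq_pos hγ0 hγ1 hv hc hρ hρd he'
  refine ⟨hpos, ?_⟩
  have h10 : (1 - (0 : Fin 2)) = 1 := by decide
  have h11 : (1 - (1 : Fin 2)) = 0 := by decide
  have hvi1 := vi_lemma hγ0 he hpos 0 (e' 0) (he'.1 0)
  have hvi2 := vi_lemma hγ0 he hpos 1 (e' 1) (he'.1 1)
  have hvi3 := vi_lemma hγ0 he' hpos' 0 (e 0) (he.1 0)
  have hvi4 := vi_lemma hγ0 he' hpos' 1 (e 1) (he.1 1)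
  rw [h10] at hvi1 hvi3
  rw [h11] at hvi2 hvi4
  have hSnonneg : ∀ k ∈ Finset.univ, (0:ℝ) ≤
      (lam γ (v k) (effY (ρ 0) (e 0) k) (effY (ρ 1) (e 1) k)
        - lam γ (v k) (effY (ρ 0) (e' 0) k) (effY (ρ 1) (e' 1) k))
        * (effY (ρ 0) (e' 0) k - effY (ρ 0) (e 0) k)
      + (lam γ (v k) (effY (ρ 1) (e 1) k) (effY (ρ 0) (e 0) k)
        - lam γ (v k) (effY (ρ 1) (e' 1) k) (effY (ρ 0) (e' 0) k))
        * (effY (ρ 1) (e' 1) k - effY (ρ 1) (e 1) k) := by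
    intro k _
    by_cases hk : effY (ρ 0) (e 0) k = effY (ρ 0) (e' 0) k
        ∧ effY (ρ 1) (e 1) k = effY (ρ 1) (e' 1) k
    · rw [hk.1, hk.2]
      ring_nf
      exact le_refl 0
    · have := lam_pair_strict (v := v k) hγ0 hγ1 (hv k)
        (hpos 0 k) (hpos 1 k) (hpos' 0 k) (hpos' 1 k) (by tauto)
      linarith
  have hsum : ∑ k, ((lam γ (v k) (effY (ρ 0) (e 0) k) (effY (ρ 1) (e 1) k)
        - lam γ (v k) (effY (ρ 0) (e' 0) k) (effY (ρ 1) (e' 1) k))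
        * (effY (ρ 0) (e' 0) k - effY (ρ 0) (e 0) k)
      + (lam γ (v k) (effY (ρ 1) (e 1) k) (effY (ρ 0) (e 0) k)
        - lam γ (v k) (effY (ρ 1) (e' 1) k) (effY (ρ 0) (e' 0) k))
        * (effY (ρ 1) (e' 1) k - effY (ρ 1) (e 1) k)) ≤ 0 := by
    have hexp : ∑ k, ((lam γ (v k) (effY (ρ 0) (e 0) k) (effY (ρ 1) (e 1) k)
        - lam γ (v k) (effY (ρ 0) (e' 0) k) (effY (ρ 1) (e' 1) k))
        * (effY (ρ 0) (e' 0) k - effY (ρ 0) (e 0) k)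
      + (lam γ (v k) (effY (ρ 1) (e 1) k) (effY (ρ 0) (e 0) k)
        - lam γ (v k) (effY (ρ 1) (e' 1) k) (effY (ρ 0) (e' 0) k))
        * (effY (ρ 1) (e' 1) k - effY (ρ 1) (e 1) k))
        = (∑ k, lam γ (v k) (effY (ρ 0) (e 0) k) (effY (ρ 1) (e 1) k)
            * (effY (ρ 0) (e' 0) k - effY (ρ 0) (e 0) k))
          + (∑ k, lam γ (v k) (effY (ρ 1) (e 1) k) (effY (ρ 0) (e 0) k)
            * (effY (ρ 1) (e' 1) k - effY (ρ 1) (e 1) k))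
          + (∑ k, lam γ (v k) (effY (ρ 0) (e' 0) k) (effY (ρ 1) (e' 1) k)
            * (effY (ρ 0) (e 0) k - effY (ρ 0) (e' 0) k))
          + (∑ k, lam γ (v k) (effY (ρ 1) (e' 1) k) (effY (ρ 0) (e' 0) k)
            * (effY (ρ 1) (e 1) k - effY (ρ 1) (e' 1) k)) := by
      rw [← Finset.sum_add_distrib, ← Finset.sum_add_distrib, ← Finset.sum_add_distrib]
      apply Finset.sum_congr rfl
      intro k _
      ring
    rw [hexp]
    linarith [hvi1, hvi2, hvi3, hvi4]
  have hzero := (Finset.sum_eq_zero_iff_of_nonneg hSnonneg).1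
    (le_antisymm hsum (Finset.sum_nonneg hSnonneg))
  intro i k
  have hSk := hzero k (Finset.mem_univ k)
  by_contra hcon
  have hne : effY (ρ 0) (e 0) k ≠ effY (ρ 0) (e' 0) k
      ∨ effY (ρ 1) (e 1) k ≠ effY (ρ 1) (e' 1) k := by
    fin_cases i
    · exact Or.inl hcon
    · exact Or.inr hcon
  have := lam_pair_strict (v := v k) hγ0 hγ1 (hv k)
    (hpos 0 k) (hpos 1 k) (hpos' 0 k) (hpos' 1 k) hne
  linarith
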